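/- Let G = (V,E) be a finite simple graph, let k be a natural number, and let {u,v} ∈ E be an edge such that the clique number of the subgraph of G induced on the common neighborhood N(u) ∩ N(v) is at most θ(G,k) − 3. Then θ(G,k) = θ(G', k), where G' is the graph (V, E ∖ {{u,v}}) obtained from G by deleting the edge {u,v}. -/
import Mathlib


open SimpleGraph

/-- `theta G k` is the minimum, over all vertex subsets `S` with `|S| ≤ k`, of the
clique number of the subgraph of `G` induced on the complement of `S`. -/
noncomputable def theta {V : Type*} (G : SimpleGraph V) (k : ℕ) : ℕ :=
  sInf {m | ∃ S : Finset V, S.card ≤ k ∧ (G.induce ((↑S : Set V)ᶜ)).cliqueNum = m}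

lemma card_le_cliqueNum_induce {V : Type*} [Fintype V] (G : SimpleGraph V) (T : Set V)
    (t : Finset V) (hsub : ↑t ⊆ T) (hc : G.IsClique ↑t) : t.card ≤ (G.induce T).cliqueNum := by
  classical
  haveI : Fintype ↥T := Fintype.ofFinite _
  set s : Finset ↥T := t.subtype (· ∈ T) with hs
  have hcard : s.card = t.card := by
    rw [hs, Finset.card_subtype, Finset.filter_true_of_mem]
    intro x hx; exact hsub hx
  have hclique : (G.induce T).IsClique ↑s := by
    intro a ha b hb hab
    have ha' : (a : V) ∈ t := by simpa [hs] using ha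
    have hb' : (b : V) ∈ t := by simpa [hs] using hb
    have hne : (a : V) ≠ (b : V) := fun e => hab (Subtype.ext e)
    exact hc ha' hb' hne
  calc t.card = s.card := hcard.symm
    _ ≤ (G.induce T).cliqueNum := IsClique.card_le_cliqueNum (tc := hclique)

lemma exists_clique_of_induce {V : Type*} [Fintype V] (G : SimpleGraph V) (T : Set V) :
    ∃ t : Finset V, ↑t ⊆ T ∧ G.IsClique ↑t ∧ t.card = (G.induce T).cliqueNum := by
  classical
  haveI : Fintype ↥T := Fintype.ofFinite _
  obtain ⟨s, hs⟩ := (G.induce T).exists_isNClique_cliqueNum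
  refine ⟨s.map (Function.Embedding.subtype _), ?_, ?_, by rw [Finset.card_map]; exact hs.2⟩
  · intro x hx
    simp only [Finset.coe_map, Set.mem_image] at hx
    obtain ⟨a, _, rfl⟩ := hx
    exact a.2
  · intro a ha b hb hab
    simp only [Finset.coe_map, Set.mem_image, Finset.mem_coe] at ha hb
    obtain ⟨a', ha', rfl⟩ := ha
    obtain ⟨b', hb', rfl⟩ := hb
    have : a' ≠ b' := fun e => hab (by rw [e])
    exact hs.1 ha' hb' this

theorem triangle_clique_reduction {V : Type*} [Fintype V] (G : SimpleGraph V) (k : ℕ)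
    (u v : V) (hadj : G.Adj u v)
    (h : ((G.induce (G.neighborSet u ∩ G.neighborSet v)).cliqueNum : ℤ) ≤ (theta G k : ℤ) - 3) :
    theta G k = theta (G.deleteEdges {s(u, v)}) k := by
  classical
  set G' := G.deleteEdges {s(u, v)} with hG'
  have key : ∀ S : Finset V, S.card ≤ k →
      (G.induce ((↑S : Set V)ᶜ)).cliqueNum = (G'.induce ((↑S : Set V)ᶜ)).cliqueNum := by
    intro S hS
    have hθle : theta G k ≤ (G.induce ((↑S : Set V)ᶜ)).cliqueNum :=
      Nat.sInf_le ⟨S, hS, rfl⟩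
    apply le_antisymm
    · obtain ⟨t, hsub, hc, hcard⟩ := exists_clique_of_induce G ((↑S : Set V)ᶜ)
      by_cases huv : u ∈ t ∧ v ∈ t
      · exfalso
        set t' := (t.erase u).erase v with ht'
        have hsub' : ↑t' ⊆ (G.neighborSet u ∩ G.neighborSet v) := by
          intro x hx
          have hx' : x ∈ (t.erase u).erase v := hx
          have hxv := Finset.ne_of_mem_erase hx'
          have hxu := Finset.ne_of_mem_erase (Finset.mem_of_mem_erase hx')
          have hxt := Finset.mem_of_mem_erase (Finset.mem_of_mem_erase hx')
          exact ⟨hc huv.1 hxt (Ne.symm hxu), hc huv.2 hxt (Ne.symm hxv)⟩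
        have hc' : G.IsClique ↑t' := hc.subset (by
          intro x hx
          have hx' : x ∈ (t.erase u).erase v := hx
          exact Finset.mem_of_mem_erase (Finset.mem_of_mem_erase hx'))
        have h1 : t'.card ≤ (G.induce (G.neighborSet u ∩ G.neighborSet v)).cliqueNum :=
          card_le_cliqueNum_induce G _ t' hsub' hc'
        have hvmem : v ∈ t.erase u := Finset.mem_erase.mpr ⟨hadj.ne', huv.2⟩
        have hcardt' : t'.card = t.card - 2 := by
          rw [ht', Finset.card_erase_of_mem hvmem, Finset.card_erase_of_mem huv.1]
          omega
        have hθc : theta G k ≤ t.card := by rw [hcard]; exact hθle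
        have h3 : (G.induce (G.neighborSet u ∩ G.neighborSet v)).cliqueNum + 3 ≤ theta G k := by
          exact_mod_cast (by linarith :
            ((G.induce (G.neighborSet u ∩ G.neighborSet v)).cliqueNum : ℤ) + 3 ≤ (theta G k : ℤ))
        omega
      · have hc' : G'.IsClique ↑t := by
          intro a ha b hb hab
          have hGab := hc ha hb hab
          rw [hG', deleteEdges_adj]
          refine ⟨hGab, ?_⟩
          simp only [Set.mem_singleton_iff, Sym2.eq_iff]
          rintro (⟨rfl, rfl⟩ | ⟨rfl, rfl⟩)
          · exact huv ⟨ha, hb⟩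
          · exact huv ⟨hb, ha⟩
        have := card_le_cliqueNum_induce G' _ t hsub hc'
        omega
    · obtain ⟨t, hsub, hc, hcard⟩ := exists_clique_of_induce G' ((↑S : Set V)ᶜ)
      have hcG : G.IsClique ↑t := hc.mono (deleteEdges_le _)
      have := card_le_cliqueNum_induce G _ t hsub hcG
      omega
  unfold theta
  congr 1
  ext m
  constructor
  · rintro ⟨S, hS, rfl⟩; exact ⟨S, hS, (key S hS).symm⟩
  · rintro ⟨S, hS, rfl⟩; exact ⟨S, hS, key S hS⟩
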